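/- Let w ∈ S_n be a prism with a letter i ∈ supp(w) unconfined in every reduced word of w, and suppose both i−1 ∈ supp(w) and i+1 ∈ supp(w). Then at least one of the following holds (these are the one-line-notation renderings of the four calibrated mesh patterns of the proposition): (a) w(i) < i, w(i+1) = i, and {w(1),…,w(i+1)} = {1,…,i} ∪ {y} for some y > i+1; (b) w(i) = i+1, w(i+1) > i+1, and {w(1),…,w(i−1)} = {1,…,i} \ {a} for some a ≤ i−1; (c) w(i) < i, w(i+1) > i+1, and {w(1),…,w(i−1)} = ({1,…,i−1} \ {w(i)}) ∪ {i+1}; (d) w(i) > i+1, w(i+1) < i, and {w(1),…,w(i−1)} = ({1,…,i−1} \ {w(i+1)}) ∪ {i}. -/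

import Mathlib

/-- The adjacent transposition `σ_i`, swapping `i` and `i+1` (acting on `ℕ`). -/
def sigmaT (i : ℕ) : Equiv.Perm ℕ := Equiv.swap i (i + 1)

/-- The permutation given by a word (product of simple reflections, composed as functions). -/
def wordProd (s : List ℕ) : Equiv.Perm ℕ := (s.map sigmaT).prod

/-- `s` is a word for `w` in `S_n`: all letters lie in `{1,…,n-1}` and the product is `w`. -/
def IsWord (n : ℕ) (w : Equiv.Perm ℕ) (s : List ℕ) : Prop :=
  (∀ j ∈ s, 1 ≤ j ∧ j ≤ n - 1) ∧ wordProd s = w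

/-- `s` is a reduced word for `w`: a word of minimal length. -/
def IsReducedWord (n : ℕ) (w : Equiv.Perm ℕ) (s : List ℕ) : Prop :=
  IsWord n w s ∧ ∀ t : List ℕ, IsWord n w t → s.length ≤ t.length

/-- The Coxeter length `ℓ(w)`. -/
noncomputable def ell (n : ℕ) (w : Equiv.Perm ℕ) : ℕ :=
  sInf {k | ∃ s : List ℕ, IsWord n w s ∧ s.length = k}

/-- The support of `w`: letters appearing in reduced words of `w`. -/
def supp (n : ℕ) (w : Equiv.Perm ℕ) : Set ℕ :=
  {i | ∃ s : List ℕ, IsReducedWord n w s ∧ i ∈ s}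

/-- Bruhat order: some reduced word of `v` is a subsequence of some reduced word of `w`. -/
def BruhatLE (n : ℕ) (v w : Equiv.Perm ℕ) : Prop :=
  ∃ s t : List ℕ, IsReducedWord n v s ∧ IsReducedWord n w t ∧ s.Sublist t

/-- The principal order ideal `B(w)`, as a type. -/
def IdealB (n : ℕ) (w : Equiv.Perm ℕ) : Type := {v : Equiv.Perm ℕ // BruhatLE n v w}

/-- The Bruhat order restricted to `B(w)`. -/
def IdealLE (n : ℕ) (w : Equiv.Perm ℕ) (a b : IdealB n w) : Prop := BruhatLE n a.1 b.1

/-- Two relations are isomorphic (order isomorphism of the corresponding ordered sets). -/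
def RelIsomorphic {α β : Type*} (ra : α → α → Prop) (rb : β → β → Prop) : Prop :=
  ∃ e : α ≃ β, ∀ a b : α, ra a b ↔ rb (e a) (e b)

/-- `w` is a prism: `B(w) ≅ C₂ × X` for some partially ordered set `X`
(the two-element chain `C₂` realized as `Bool`), with the componentwise order. -/
def IsPrism (n : ℕ) (w : Equiv.Perm ℕ) : Prop :=
  ∃ (X : Type) (rX : X → X → Prop), IsPartialOrder X rX ∧
    RelIsomorphic (IdealLE n w)
      (fun p q : Bool × X => (p.1 ≤ q.1) ∧ rX p.2 q.2)

/-- `w` belongs to `S_n`: it fixes every point outside `{1,…,n}`. -/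
def MemSymm (n : ℕ) (w : Equiv.Perm ℕ) : Prop :=
  ∀ x : ℕ, x ∉ Set.Icc 1 n → w x = x

/-- `i` is unconfined in the word `s`: it appears exactly once, not between two copies
of `i+1` and not between two copies of `i-1`. -/
def Unconfined (i : ℕ) (s : List ℕ) : Prop :=
  s.count i = 1 ∧ ∀ a b : List ℕ, s = a ++ i :: b →
    ¬((i + 1) ∈ a ∧ (i + 1) ∈ b) ∧ ¬((i - 1) ∈ a ∧ (i - 1) ∈ b)

/-- `B(w) ≅ C₂ × B(v)` with the componentwise order. -/
def IsoC2TimesIdeal (n : ℕ) (w v : Equiv.Perm ℕ) : Prop :=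
  RelIsomorphic (IdealLE n w)
    (fun p q : Bool × IdealB n v => (p.1 ≤ q.1) ∧ IdealLE n v p.2 q.2)

section Aux

open Finset in
lemma junk : True := trivial

lemma wordProd_nil : wordProd [] = 1 := rfl

lemma wordProd_cons (x : ℕ) (s : List ℕ) : wordProd (x :: s) = sigmaT x * wordProd s := by
  simp [wordProd]

lemma wordProd_append (s t : List ℕ) : wordProd (s ++ t) = wordProd s * wordProd t := by
  simp [wordProd]

lemma memSymm_one (n : ℕ) : MemSymm n 1 := fun x _ => rfl

lemma memSymm_sigmaT (n x : ℕ) (h1 : 1 ≤ x) (h2 : x ≤ n - 1) : MemSymm n (sigmaT x) := by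
  intro y hy
  simp only [Set.mem_Icc, not_and, not_le] at hy
  have hx : x + 1 ≤ n := by omega
  apply Equiv.swap_apply_of_ne_of_ne <;> omega

lemma memSymm_mul {n : ℕ} {f g : Equiv.Perm ℕ} (hf : MemSymm n f) (hg : MemSymm n g) :
    MemSymm n (f * g) := by
  intro x hx
  simp [Equiv.Perm.mul_apply, hg x hx, hf x hx]

lemma memSymm_inv {n : ℕ} {f : Equiv.Perm ℕ} (hf : MemSymm n f) : MemSymm n f⁻¹ := by
  intro x hx
  have := hf x hx
  conv_lhs => rw [← this]
  simp

lemma memSymm_wordProd {n : ℕ} {s : List ℕ} (h : ∀ j ∈ s, 1 ≤ j ∧ j ≤ n - 1) :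
    MemSymm n (wordProd s) := by
  induction s with
  | nil => exact memSymm_one n
  | cons x t ih =>
    rw [wordProd_cons]
    exact memSymm_mul (memSymm_sigmaT n x (h x (by simp)).1 (h x (by simp)).2)
      (ih fun j hj => h j (by simp [hj]))

lemma memSymm_apply_mem {n : ℕ} {f : Equiv.Perm ℕ} (hf : MemSymm n f) {x : ℕ}
    (h1 : 1 ≤ x) (h2 : x ≤ n) : 1 ≤ f x ∧ f x ≤ n := by
  by_contra hc
  have hfx : f x ∉ Set.Icc 1 n := by
    simp only [Set.mem_Icc]; tauto
  have h3 := hf (f x) hfx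
  have h4 : f x = x := f.injective h3
  omega

lemma memSymm_zero_lt {n : ℕ} {f : Equiv.Perm ℕ} (hf : MemSymm n f) {x : ℕ} (h1 : 1 ≤ x) :
    1 ≤ f x := by
  have h0 : f 0 = 0 := hf 0 (by simp)
  rcases Nat.eq_zero_or_pos (f x) with h | h
  · exfalso
    have := f.injective (h.trans h0.symm)
    omega
  · exact h

/-- `u` preserves the cut at level `j`. -/
def Pres (j : ℕ) (u : Equiv.Perm ℕ) : Prop := ∀ x, u x ≤ j ↔ x ≤ j

lemma pres_one (j : ℕ) : Pres j 1 := fun _ => Iff.rfl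

lemma pres_sigmaT {j x : ℕ} (h : x ≠ j) : Pres j (sigmaT x) := by
  intro y
  simp only [sigmaT, Equiv.swap_apply_def]
  split_ifs <;> omega

lemma pres_mul {j : ℕ} {f g : Equiv.Perm ℕ} (hf : Pres j f) (hg : Pres j g) :
    Pres j (f * g) := fun x => by
  rw [Equiv.Perm.mul_apply, hf, hg]

lemma pres_wordProd {j : ℕ} {s : List ℕ} (h : ∀ x ∈ s, x ≠ j) : Pres j (wordProd s) := by
  induction s with
  | nil => exact pres_one j
  | cons x t ih =>
    rw [wordProd_cons]
    exact pres_mul (pres_sigmaT (h x (by simp))) (ih fun y hy => h y (by simp [hy]))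

lemma pres_inv {j : ℕ} {u : Equiv.Perm ℕ} (h : Pres j u) : Pres j u⁻¹ := by
  intro x
  have := (h (u⁻¹ x)).symm
  simpa using this

lemma pres_fix_succ {j : ℕ} {u : Equiv.Perm ℕ} (h1 : Pres j u) (h2 : Pres (j + 1) u) :
    u (j + 1) = j + 1 := by
  have a := (h1 (j + 1))
  have b := (h2 (j + 1))
  omega

lemma pres_image_Icc {n j : ℕ} {u : Equiv.Perm ℕ} (hu : MemSymm n u) (h : Pres j u) :
    u '' Set.Icc 1 j = Set.Icc 1 j := by
  ext y
  simp only [Set.mem_image, Set.mem_Icc]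
  constructor
  · rintro ⟨x, ⟨hx1, hx2⟩, rfl⟩
    exact ⟨memSymm_zero_lt hu hx1, (h x).2 hx2⟩
  · rintro ⟨hy1, hy2⟩
    refine ⟨u⁻¹ y, ⟨memSymm_zero_lt (memSymm_inv hu) hy1, (pres_inv h y).2 hy2⟩, by simp⟩

end Aux
section Aux2

/-- The inversion set of `v` within `{1,…,n}`. -/
def invF (n : ℕ) (v : Equiv.Perm ℕ) : Finset (ℕ × ℕ) :=
  (Finset.Icc 1 n ×ˢ Finset.Icc 1 n).filter fun pq => pq.1 < pq.2 ∧ v pq.2 < v pq.1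

lemma mem_invF {n : ℕ} {v : Equiv.Perm ℕ} {x y : ℕ} :
    (x, y) ∈ invF n v ↔ (1 ≤ x ∧ x ≤ n) ∧ (1 ≤ y ∧ y ≤ n) ∧ x < y ∧ v y < v x := by
  simp [invF, and_assoc]

lemma invF_one (n : ℕ) : invF n 1 = ∅ := by
  ext ⟨x, y⟩
  simp only [mem_invF, Finset.notMem_empty, iff_false, Equiv.Perm.one_apply]
  omega

/-- The pair toggled when multiplying by `sigmaT j` on the left. -/
def togglePair (j : ℕ) (u : Equiv.Perm ℕ) : ℕ × ℕ :=
  if u⁻¹ j < u⁻¹ (j + 1) then (u⁻¹ j, u⁻¹ (j + 1)) else (u⁻¹ (j + 1), u⁻¹ j)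

lemma invF_mul_swap (n j : ℕ) (u : Equiv.Perm ℕ) (hj1 : 1 ≤ j) (hjn : j + 1 ≤ n)
    (hu : MemSymm n u) :
    invF n (sigmaT j * u) =
      if togglePair j u ∈ invF n u then (invF n u).erase (togglePair j u)
      else insert (togglePair j u) (invF n u) := by
  have hP := memSymm_apply_mem (memSymm_inv hu) (x := j) hj1 (by omega)
  have hQ := memSymm_apply_mem (memSymm_inv hu) (x := j + 1) (by omega) hjn
  have hPQ : u⁻¹ j ≠ u⁻¹ (j + 1) := by
    intro h
    have := u⁻¹.injective h
    omega
  have huP : u (u⁻¹ j) = j := by simp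
  have huQ : u (u⁻¹ (j + 1)) = j + 1 := by simp
  have key : ∀ x y : ℕ, x ≠ y →
      ((sigmaT j * u) y < (sigmaT j * u) x ↔
        (if (u x = j ∧ u y = j + 1) ∨ (u y = j ∧ u x = j + 1) then ¬(u y < u x)
         else u y < u x)) := by
    intro x y hxy
    have hne : u x ≠ u y := fun h => hxy (u.injective h)
    simp only [Equiv.Perm.mul_apply, sigmaT, Equiv.swap_apply_def]
    split_ifs <;> omega
  have hxP : ∀ x : ℕ, u x = j ↔ x = u⁻¹ j := by
    intro x
    constructor
    · intro h; rw [← h]; simp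
    · intro h; rw [h]; simp
  have hxQ : ∀ x : ℕ, u x = j + 1 ↔ x = u⁻¹ (j + 1) := by
    intro x
    constructor
    · intro h; rw [← h]; simp
    · intro h; rw [h]; simp
  ext ⟨x, y⟩
  by_cases hpr : (x, y) = togglePair j u
  · -- the toggled pair itself
    rcases lt_or_gt_of_ne hPQ with hlt | hgt
    · -- P < Q : pr = (P, Q), not an inversion of u, becomes one
      have htp : togglePair j u = (u⁻¹ j, u⁻¹ (j + 1)) := by
        simp only [togglePair, if_pos hlt]
      rw [htp] at hpr
      rw [Prod.mk.injEq] at hpr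
      obtain ⟨rfl, rfl⟩ := hpr
      have hnmem : (u⁻¹ j, u⁻¹ (j + 1)) ∉ invF n u := by
        rw [mem_invF, huP, huQ]
        omega
      rw [htp, if_neg hnmem]
      have hmem : (u⁻¹ j, u⁻¹ (j + 1)) ∈ invF n (sigmaT j * u) := by
        rw [mem_invF]
        refine ⟨hP, hQ, hlt, ?_⟩
        simp only [Equiv.Perm.mul_apply, huP, huQ, sigmaT]
        rw [Equiv.swap_apply_left, Equiv.swap_apply_right]
        omega
      simp only [hmem, true_iff]
      exact Finset.mem_insert_self _ _
    · -- Q < P : pr = (Q, P), an inversion of u, gets removed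
      have hnlt : ¬(u⁻¹ j < u⁻¹ (j + 1)) := by omega
      have htp : togglePair j u = (u⁻¹ (j + 1), u⁻¹ j) := by
        simp only [togglePair, if_neg hnlt]
      rw [htp] at hpr
      rw [Prod.mk.injEq] at hpr
      obtain ⟨rfl, rfl⟩ := hpr
      have hmem : (u⁻¹ (j + 1), u⁻¹ j) ∈ invF n u := by
        rw [mem_invF, huP, huQ]
        exact ⟨hQ, hP, hgt, by omega⟩
      rw [htp, if_pos hmem]
      have hnmem : (u⁻¹ (j + 1), u⁻¹ j) ∉ invF n (sigmaT j * u) := by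
        rw [mem_invF]
        simp only [Equiv.Perm.mul_apply, huP, huQ, sigmaT]
        rw [Equiv.swap_apply_left, Equiv.swap_apply_right]
        omega
      simp only [hnmem, false_iff]
      exact fun h => (Finset.notMem_erase _ _) h
  · -- any other pair: membership unchanged
    have hmain : (x, y) ∈ invF n (sigmaT j * u) ↔ (x, y) ∈ invF n u := by
      by_cases hxy : x < y
      · rw [mem_invF, mem_invF]
        have hk := key x y (by omega)
        rw [hk]
        split_ifs with hcase
        · exfalso
          apply hpr
          rcases hcase with ⟨h1, h2⟩ | ⟨h1, h2⟩
          · rw [hxP] at h1; rw [hxQ] at h2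
            subst h1; subst h2
            simp only [togglePair, if_pos hxy]
          · rw [hxP] at h1; rw [hxQ] at h2
            subst h1; subst h2
            have hnlt : ¬(u⁻¹ j < u⁻¹ (j + 1)) := by omega
            simp only [togglePair, if_neg hnlt]
        · rfl
      · rw [mem_invF, mem_invF]
        constructor <;> (intro h; exact absurd h.2.2.1 hxy)
    split_ifs with hmem
    · rw [Finset.mem_erase]
      simp [hpr, hmain]
    · rw [Finset.mem_insert]
      simp [hpr, hmain]

end Aux2
section Aux3

lemma card_invF_mul_le {n : ℕ} {m : Equiv.Perm ℕ} (hm : MemSymm n m) :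
    ∀ c : List ℕ, (∀ x ∈ c, 1 ≤ x ∧ x ≤ n - 1) →
      (invF n (wordProd c * m)).card ≤ (invF n m).card + c.length := by
  intro c
  induction c with
  | nil => intro _; simp [wordProd_nil]
  | cons x c' ih =>
    intro hc
    have hx := hc x (by simp)
    have hM' : MemSymm n (wordProd c' * m) :=
      memSymm_mul (memSymm_wordProd fun j hj => hc j (by simp [hj])) hm
    have hrw : wordProd (x :: c') * m = sigmaT x * (wordProd c' * m) := by
      rw [wordProd_cons, mul_assoc]
    rw [hrw, invF_mul_swap n x (wordProd c' * m) hx.1 (by omega) hM']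
    have hih := ih fun j hj => hc j (by simp [hj])
    split_ifs with hmem
    · calc ((invF n (wordProd c' * m)).erase _).card ≤ (invF n (wordProd c' * m)).card :=
            Finset.card_erase_le
        _ ≤ (invF n m).card + c'.length := hih
        _ ≤ (invF n m).card + (x :: c').length := by simp
    · calc (insert _ (invF n (wordProd c' * m))).card
          ≤ (invF n (wordProd c' * m)).card + 1 := Finset.card_insert_le _ _
        _ ≤ (invF n m).card + c'.length + 1 := by omega
        _ = (invF n m).card + (x :: c').length := by simp [Nat.add_comm, Nat.add_assoc]

lemma card_invF_wordProd_le {n : ℕ} {c : List ℕ} (hc : ∀ x ∈ c, 1 ≤ x ∧ x ≤ n - 1) :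
    (invF n (wordProd c)).card ≤ c.length := by
  have := card_invF_mul_le (memSymm_one n) c hc
  simpa [invF_one] using this

set_option maxHeartbeats 1000000 in
lemma card_invF_drop {n : ℕ} {m : Equiv.Perm ℕ} (hm : MemSymm n m) :
    ∀ c : List ℕ, (∀ x ∈ c, 1 ≤ x ∧ x ≤ n - 1) → ∀ pr : ℕ × ℕ,
      pr ∈ invF n m → pr ∉ invF n (wordProd c * m) →
      (invF n (wordProd c * m)).card + 2 ≤ (invF n m).card + c.length := by
  intro c
  induction c with
  | nil =>
    intro _ pr h1 h2
    rw [wordProd_nil, one_mul] at h2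
    exact absurd h1 h2
  | cons x c' ih =>
    intro hc pr h1 h2
    have hx := hc x (by simp)
    have hc' : ∀ j ∈ c', 1 ≤ j ∧ j ≤ n - 1 := fun j hj => hc j (by simp [hj])
    have hM' : MemSymm n (wordProd c' * m) := memSymm_mul (memSymm_wordProd hc') hm
    have hrw : wordProd (x :: c') * m = sigmaT x * (wordProd c' * m) := by
      rw [wordProd_cons, mul_assoc]
    rw [hrw, invF_mul_swap n x (wordProd c' * m) hx.1 (by omega) hM'] at h2 ⊢
    by_cases hprM' : pr ∈ invF n (wordProd c' * m)
    · -- pr was removed at this step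
      split_ifs at h2 ⊢ with hmem
      · rw [Finset.card_erase_of_mem hmem]
        have := card_invF_mul_le hm c' hc'
        have hcard : 1 ≤ (invF n (wordProd c' * m)).card := Finset.card_pos.mpr ⟨pr, hprM'⟩
        simp only [List.length_cons]
        omega
      · exfalso
        exact h2 (Finset.mem_insert_of_mem hprM')
    · -- pr already gone
      have hih := ih hc' pr h1 hprM'
      split_ifs at h2 ⊢ with hmem
      · have : ((invF n (wordProd c' * m)).erase (togglePair x (wordProd c' * m))).card
            ≤ (invF n (wordProd c' * m)).card := Finset.card_erase_le
        simp only [List.length_cons]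
        omega
      · have : (insert (togglePair x (wordProd c' * m)) (invF n (wordProd c' * m))).card
            ≤ (invF n (wordProd c' * m)).card + 1 := Finset.card_insert_le _ _
        simp only [List.length_cons]
        omega

lemma ge_id_imp_id {n : ℕ} {g : Equiv.Perm ℕ} (hg : MemSymm n g) (h : ∀ x, x ≤ g x) :
    g = 1 := by
  ext x
  simp only [Equiv.Perm.one_apply]
  by_cases hx : 1 ≤ x ∧ x ≤ n
  · -- pigeonhole on Icc x n
    by_contra hne
    have hlt : x < g x := lt_of_le_of_ne (h x) (Ne.symm hne)
    -- g maps Finset.Icc x n into itself injectively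
    have hmaps : ∀ y ∈ Finset.Icc x n, g y ∈ Finset.Icc x n := by
      intro y hy
      simp only [Finset.mem_Icc] at hy ⊢
      have h2 := memSymm_apply_mem hg (x := y) (by omega) hy.2
      exact ⟨le_trans hy.1 (h y), h2.2⟩
    have himg : (Finset.Icc x n).image g = Finset.Icc x n := by
      apply Finset.eq_of_subset_of_card_le
      · intro y hy
        simp only [Finset.mem_image] at hy
        obtain ⟨z, hz, rfl⟩ := hy
        exact hmaps z hz
      · rw [Finset.card_image_of_injective _ g.injective]
    have hxmem : x ∈ (Finset.Icc x n).image g := by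
      rw [himg]
      simp only [Finset.mem_Icc]
      omega
    simp only [Finset.mem_image] at hxmem
    obtain ⟨z, hz, hgz⟩ := hxmem
    simp only [Finset.mem_Icc] at hz
    have : z ≤ g z := h z
    have : z = x := by omega
    subst this
    omega
  · exact hg x (by simpa [Set.mem_Icc] using hx)

lemma ascent_all_imp_id {n : ℕ} {g : Equiv.Perm ℕ} (hg : MemSymm n g)
    (h : ∀ x, 1 ≤ x → x ≤ n - 1 → g x < g (x + 1)) : g = 1 := by
  apply ge_id_imp_id hg
  intro x
  induction x with
  | zero => simp
  | succ k ih =>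
    by_cases hk : k + 1 ≤ n
    · rcases Nat.eq_zero_or_pos k with hk0 | hk1
      · subst hk0
        simp only [Nat.zero_add]
        have h0 : g 0 = 0 := hg 0 (by simp)
        have : g 1 ≠ 0 := by
          intro hcon
          have := g.injective (hcon.trans h0.symm)
          omega
        omega
      · have hd := h k hk1 (by omega)
        omega
    · have : g (k + 1) = k + 1 := hg (k + 1) (by simp only [Set.mem_Icc]; omega)
      omega

lemma exists_descent_inv {n : ℕ} {v : Equiv.Perm ℕ} (hv : MemSymm n v) (hne : v ≠ 1) :
    ∃ x, 1 ≤ x ∧ x ≤ n - 1 ∧ v⁻¹ (x + 1) < v⁻¹ x := by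
  by_contra hcon
  push_neg at hcon
  apply hne
  have hvinv : v⁻¹ = 1 := by
    apply ascent_all_imp_id (memSymm_inv hv)
    intro x h1 h2
    have := hcon x h1 h2
    have hne2 : v⁻¹ x ≠ v⁻¹ (x + 1) := by
      intro h
      have := v⁻¹.injective h
      omega
    omega
  calc v = (v⁻¹)⁻¹ := by simp
    _ = 1 := by rw [hvinv]; simp

lemma exists_word_of_length_invF {n : ℕ} :
    ∀ k (v : Equiv.Perm ℕ), MemSymm n v → (invF n v).card = k →
      ∃ t : List ℕ, IsWord n v t ∧ t.length = (invF n v).card := by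
  intro k
  induction k using Nat.strong_induction_on with
  | _ k ih =>
    intro v hv hcard
    by_cases hone : v = 1
    · subst hone
      exact ⟨[], ⟨by simp, wordProd_nil⟩, by simp [invF_one]⟩
    · obtain ⟨x, hx1, hx2, hdesc⟩ := exists_descent_inv hv hone
      set v' : Equiv.Perm ℕ := sigmaT x * v with hv'def
      have hsig : sigmaT x * sigmaT x = 1 := by
        simp [sigmaT]
      have hvv' : v = sigmaT x * v' := by
        rw [hv'def, ← mul_assoc, hsig, one_mul]
      have hv'mem : MemSymm n v' := memSymm_mul (memSymm_sigmaT n x hx1 hx2) hv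
      -- compute togglePair x v'
      have hv'inv : v'⁻¹ = v⁻¹ * (sigmaT x)⁻¹ := by rw [hv'def]; simp [mul_inv_rev]
      have hsiginv : (sigmaT x)⁻¹ = sigmaT x := by simp [sigmaT]
      have ha : v'⁻¹ x = v⁻¹ (x + 1) := by
        rw [hv'inv, hsiginv]
        simp [sigmaT, Equiv.Perm.mul_apply]
      have hb : v'⁻¹ (x + 1) = v⁻¹ x := by
        rw [hv'inv, hsiginv]
        simp [sigmaT, Equiv.Perm.mul_apply]
      have htp : togglePair x v' = (v⁻¹ (x + 1), v⁻¹ x) := by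
        rw [togglePair, ha, hb, if_pos hdesc]
      have hv'P : v' (v⁻¹ (x + 1)) = x := by
        rw [hv'def]
        simp only [Equiv.Perm.mul_apply, Equiv.Perm.coe_inv, Equiv.apply_symm_apply, sigmaT]
        exact Equiv.swap_apply_right _ _
      have hv'Q : v' (v⁻¹ x) = x + 1 := by
        rw [hv'def]
        simp only [Equiv.Perm.mul_apply, Equiv.Perm.coe_inv, Equiv.apply_symm_apply, sigmaT]
        exact Equiv.swap_apply_left _ _
      have hnmem : togglePair x v' ∉ invF n v' := by
        rw [htp, mem_invF, hv'P, hv'Q]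
        omega
      have hswap := invF_mul_swap n x v' hx1 (by omega) hv'mem
      rw [if_neg hnmem] at hswap
      rw [← hvv'] at hswap
      have hcard' : (invF n v).card = (invF n v').card + 1 := by
        rw [hswap, Finset.card_insert_of_notMem hnmem]
      obtain ⟨t', ⟨ht'r, ht'p⟩, ht'len⟩ := ih ((invF n v').card) (by omega) v' hv'mem rfl
      refine ⟨x :: t', ⟨?_, ?_⟩, ?_⟩
      · intro j hj
        rcases List.mem_cons.mp hj with rfl | hj'
        · exact ⟨hx1, hx2⟩
        · exact ht'r j hj'
      · rw [wordProd_cons, ht'p, ← hvv']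
      · simp [ht'len, hcard']

lemma reduced_length {n : ℕ} {w : Equiv.Perm ℕ} {s : List ℕ} (hs : IsReducedWord n w s) :
    s.length = (invF n w).card := by
  obtain ⟨⟨hrange, hprod⟩, hmin⟩ := hs
  have hmem : MemSymm n w := hprod ▸ memSymm_wordProd hrange
  obtain ⟨t, htw, htlen⟩ := exists_word_of_length_invF (invF n w).card w hmem rfl
  have h1 : s.length ≤ (invF n w).card := htlen ▸ hmin t htw
  have h2 : (invF n w).card ≤ s.length := by
    have := card_invF_wordProd_le hrange
    rwa [hprod] at this
  omega

lemma exists_split_last {a : ℕ} {l : List ℕ} (h : a ∈ l) :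
    ∃ s t : List ℕ, l = s ++ a :: t ∧ a ∉ t := by
  induction l with
  | nil => simp at h
  | cons x xs ih =>
    by_cases hxs : a ∈ xs
    · obtain ⟨s, t, hst, hat⟩ := ih hxs
      exact ⟨x :: s, t, by simp [hst], hat⟩
    · rcases List.mem_cons.mp h with rfl | h'
      · exact ⟨[], xs, rfl, hxs⟩
      · exact absurd h' hxs

/-- Key claim: if `w` preserves the cut at level `j`, no reduced word of `w` contains `j`. -/
lemma pres_not_mem_reduced {n j : ℕ} {w : Equiv.Perm ℕ} {t : List ℕ}
    (ht : IsReducedWord n w t) (hp : Pres j w) (hj : j ∈ t) : False := by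
  obtain ⟨⟨hrange, hprod⟩, hmin⟩ := ht
  have hj1 : 1 ≤ j := (hrange j hj).1
  have hjn : j + 1 ≤ n := by have := (hrange j hj).2; omega
  obtain ⟨c, d, hcd, hjd⟩ := exists_split_last hj
  have hdrange : ∀ x ∈ d, 1 ≤ x ∧ x ≤ n - 1 := fun x hx =>
    hrange x (by rw [hcd]; simp [hx])
  have hcrange : ∀ x ∈ c, 1 ≤ x ∧ x ≤ n - 1 := fun x hx =>
    hrange x (by rw [hcd]; simp [hx])
  set u := wordProd d with hudef
  have humem : MemSymm n u := memSymm_wordProd hdrange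
  have hupres : Pres j u := pres_wordProd fun x hx => by
    intro hcon
    exact hjd (hcon ▸ hx)
  set m : Equiv.Perm ℕ := sigmaT j * u with hmdef
  have hmmem : MemSymm n m := memSymm_mul (memSymm_sigmaT n j hj1 (by omega)) humem
  have hw : w = wordProd c * m := by
    rw [← hprod, hcd, wordProd_append, wordProd_cons]
  -- the toggled pair
  have hpq : u⁻¹ j < u⁻¹ (j + 1) := by
    have h1 : u⁻¹ j ≤ j := (pres_inv hupres j).2 le_rfl
    have h2 : ¬ u⁻¹ (j + 1) ≤ j := by
      rw [pres_inv hupres (j + 1)]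
      omega
    omega
  have hP := memSymm_apply_mem (memSymm_inv humem) (x := j) hj1 (by omega)
  have hQ := memSymm_apply_mem (memSymm_inv humem) (x := j + 1) (by omega) hjn
  have hmP : m (u⁻¹ j) = j + 1 := by
    rw [hmdef]
    simp only [Equiv.Perm.mul_apply, Equiv.Perm.coe_inv, Equiv.apply_symm_apply, sigmaT]
    exact Equiv.swap_apply_left _ _
  have hmQ : m (u⁻¹ (j + 1)) = j := by
    rw [hmdef]
    simp only [Equiv.Perm.mul_apply, Equiv.Perm.coe_inv, Equiv.apply_symm_apply, sigmaT]
    exact Equiv.swap_apply_right _ _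
  have hprm : (u⁻¹ j, u⁻¹ (j + 1)) ∈ invF n m := by
    rw [mem_invF, hmP, hmQ]
    exact ⟨hP, hQ, hpq, by omega⟩
  have hprw : (u⁻¹ j, u⁻¹ (j + 1)) ∉ invF n w := by
    rw [mem_invF]
    intro hcon
    have h1 : w (u⁻¹ j) ≤ j := (hp _).mpr ((pres_inv hupres j).2 le_rfl)
    have h2 : ¬ w (u⁻¹ (j + 1)) ≤ j := by
      rw [hp]
      rw [pres_inv hupres (j + 1)]
      omega
    omega
  have hdrop := card_invF_drop hmmem c hcrange _ hprm (hw ▸ hprw)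
  rw [← hw] at hdrop
  -- bound card (invF n m)
  have hins := invF_mul_swap n j u hj1 hjn humem
  have htpu : togglePair j u = (u⁻¹ j, u⁻¹ (j + 1)) := by
    rw [togglePair, if_pos hpq]
  have hnmemu : togglePair j u ∉ invF n u := by
    rw [htpu, mem_invF]
    simp only [Equiv.Perm.coe_inv, Equiv.apply_symm_apply]
    omega
  rw [if_neg hnmemu] at hins
  have hmcard : (invF n m).card = (invF n u).card + 1 := by
    rw [hmdef, hins, Finset.card_insert_of_notMem hnmemu]
  have hucard : (invF n u).card ≤ d.length := card_invF_wordProd_le hdrange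
  have hlen : t.length = c.length + 1 + d.length := by
    rw [hcd]; simp; omega
  have hred : t.length = (invF n w).card := reduced_length ⟨⟨hrange, hprod⟩, hmin⟩
  omega

end Aux3
section Aux4

lemma pres_up {j : ℕ} {u : Equiv.Perm ℕ} (h : Pres j u) (hf : u (j + 1) = j + 1) :
    Pres (j + 1) u := by
  intro x
  constructor
  · intro hx
    by_cases he : u x = j + 1
    · have := u.injective (he.trans hf.symm)
      omega
    · have : u x ≤ j := by omega
      have := (h x).1 this
      omega
  · intro hx
    by_cases he : x = j + 1
    · subst he; omega
    · have : x ≤ j := by omega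
      have := (h x).2 this
      omega

lemma pres_down {j : ℕ} {u : Equiv.Perm ℕ} (h : Pres (j + 1) u) (hf : u (j + 1) = j + 1) :
    Pres j u := by
  intro x
  constructor
  · intro hx
    have h1 : u x ≤ j + 1 := by omega
    have h2 := (h x).1 h1
    by_cases he : x = j + 1
    · subst he; omega
    · omega
  · intro hx
    have h1 : x ≤ j + 1 := by omega
    have h2 := (h x).2 h1
    by_cases he : u x = j + 1
    · have := u.injective (he.trans hf.symm)
      omega
    · omega

lemma apply_succ_lt {n j : ℕ} {A : Equiv.Perm ℕ} {a : List ℕ}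
    (ha : IsReducedWord n A a) (hp : Pres (j + 1) A) (hj : j ∈ a) : A (j + 1) ≤ j := by
  have h1 : A (j + 1) ≤ j + 1 := (hp (j + 1)).2 le_rfl
  by_cases he : A (j + 1) = j + 1
  · exact absurd (pres_not_mem_reduced ha (pres_down hp he) hj) not_false
  · omega

lemma apply_succ_gt {n j : ℕ} {A : Equiv.Perm ℕ} {a : List ℕ}
    (ha : IsReducedWord n A a) (hp : Pres j A) (hj : j + 1 ∈ a) : j + 1 < A (j + 1) := by
  have h1 : ¬ A (j + 1) ≤ j := by
    rw [hp]
    omega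
  by_cases he : A (j + 1) = j + 1
  · exact absurd (pres_not_mem_reduced ha (pres_up hp he) hj) not_false
  · omega

lemma sub_reduced {n i : ℕ} {w : Equiv.Perm ℕ} {s a b : List ℕ}
    (hs : IsReducedWord n w s) (hsplit : s = a ++ i :: b) :
    IsReducedWord n (wordProd a) a ∧ IsReducedWord n (wordProd b) b := by
  obtain ⟨⟨hrange, hprod⟩, hmin⟩ := hs
  have harange : ∀ x ∈ a, 1 ≤ x ∧ x ≤ n - 1 := fun x hx => hrange x (by simp [hsplit, hx])
  have hbrange : ∀ x ∈ b, 1 ≤ x ∧ x ≤ n - 1 := fun x hx => hrange x (by simp [hsplit, hx])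
  have hirange : 1 ≤ i ∧ i ≤ n - 1 := hrange i (by simp [hsplit])
  constructor
  · refine ⟨⟨harange, rfl⟩, ?_⟩
    intro t ⟨htr, htp⟩
    have hword : IsWord n w (t ++ i :: b) := by
      constructor
      · intro x hx
        rcases List.mem_append.mp hx with h | h
        · exact htr x h
        · rcases List.mem_cons.mp h with rfl | h'
          · exact hirange
          · exact hbrange x h'
      · rw [wordProd_append, wordProd_cons, htp, ← hprod, hsplit,
          wordProd_append, wordProd_cons]
    have := hmin _ hword
    rw [hsplit] at this
    simp only [List.length_append, List.length_cons] at this ⊢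
    omega
  · refine ⟨⟨hbrange, rfl⟩, ?_⟩
    intro t ⟨htr, htp⟩
    have hword : IsWord n w (a ++ i :: t) := by
      constructor
      · intro x hx
        rcases List.mem_append.mp hx with h | h
        · exact harange x h
        · rcases List.mem_cons.mp h with rfl | h'
          · exact hirange
          · exact htr x h'
      · rw [wordProd_append, wordProd_cons, htp, ← hprod, hsplit,
          wordProd_append, wordProd_cons]
    have := hmin _ hword
    rw [hsplit] at this
    simp only [List.length_append, List.length_cons] at this ⊢
    omega

lemma count_one_split {i : ℕ} {s : List ℕ} (hc : s.count i = 1) (hm : i ∈ s) :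
    ∃ a b : List ℕ, s = a ++ i :: b ∧ i ∉ a ∧ i ∉ b := by
  obtain ⟨a, b, hab, hib⟩ := exists_split_last hm
  refine ⟨a, b, hab, ?_, hib⟩
  intro hia
  rw [hab, List.count_append, List.count_cons_self] at hc
  have : 1 ≤ a.count i := List.one_le_count_iff.mpr hia
  omega

lemma supp_mem_of_reduced {n j : ℕ} {w : Equiv.Perm ℕ} {s : List ℕ}
    (hs : IsReducedWord n w s) (hj : j ∈ supp n w) : j ∈ s := by
  by_contra hns
  obtain ⟨t, htred, hjt⟩ := hj
  have hpres : Pres j w := by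
    rw [← hs.1.2]
    exact pres_wordProd fun x hx hxj => hns (hxj ▸ hx)
  exact pres_not_mem_reduced htred hpres hjt

lemma perm_image_mul (f g : Equiv.Perm ℕ) (S : Set ℕ) : ⇑(f * g) '' S = f '' (g '' S) := by
  rw [← Set.image_comp]
  rfl

lemma perm_image_diff (f : Equiv.Perm ℕ) (S : Set ℕ) (x : ℕ) :
    f '' (S \ {x}) = (f '' S) \ {f x} := by
  rw [Set.image_diff f.injective, Set.image_singleton]

end Aux4

/-- a prism with unconfined i and i±1 ∈ supp(w) contains one of the four
calibrated patterns (one-line-notation rendering). -/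
theorem prism_nearby_support (n : ℕ) (w : Equiv.Perm ℕ) (hw : MemSymm n w) (i : ℕ)
    (hprism : IsPrism n w) (hi : i ∈ supp n w)
    (hu : ∀ s : List ℕ, IsReducedWord n w s → Unconfined i s)
    (hbelow : i - 1 ∈ supp n w) (habove : i + 1 ∈ supp n w) :
    (w i < i ∧ w (i + 1) = i ∧
      ∃ y : ℕ, i + 1 < y ∧ (⇑w) '' Set.Icc 1 (i + 1) = Set.Icc 1 i ∪ {y}) ∨
    (w i = i + 1 ∧ i + 1 < w (i + 1) ∧
      ∃ a : ℕ, a ≤ i - 1 ∧ (⇑w) '' Set.Icc 1 (i - 1) = Set.Icc 1 i \ {a}) ∨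
    (w i < i ∧ i + 1 < w (i + 1) ∧
      (⇑w) '' Set.Icc 1 (i - 1) = (Set.Icc 1 (i - 1) \ {w i}) ∪ {i + 1}) ∨
    (i + 1 < w i ∧ w (i + 1) < i ∧
      (⇑w) '' Set.Icc 1 (i - 1) = (Set.Icc 1 (i - 1) \ {w (i + 1)}) ∪ {i}) := by
  obtain ⟨s, hsred, his⟩ := hi
  obtain ⟨hcount, hside⟩ := hu s hsred
  obtain ⟨a, b, hsplit, hia, hib⟩ := count_one_split hcount his
  -- `i ≥ 2` since `i - 1` is a letter of a reduced word
  have hge2 : 2 ≤ i := by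
    obtain ⟨tb, htbred, htbmem⟩ := hbelow
    have := (htbred.1.1 _ htbmem).1
    omega
  have hiran : 1 ≤ i ∧ i ≤ n - 1 := hsred.1.1 i his
  obtain ⟨k, rfl⟩ : ∃ k, i = k + 2 := ⟨i - 2, by omega⟩
  have e1 : k + 2 - 1 = k + 1 := rfl
  have e2 : k + 2 + 1 = k + 3 := rfl
  simp only [e1, e2]
  rw [e1] at hbelow
  rw [e2] at habove
  -- both nearby letters occur in `s`
  have hmem_b : k + 1 ∈ s := supp_mem_of_reduced hsred hbelow
  have hmem_a : k + 3 ∈ s := supp_mem_of_reduced hsred habove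
  have hside2 := hside a b hsplit
  rw [e1, e2] at hside2
  have hup : k + 3 ∈ a ∨ k + 3 ∈ b := by
    rw [hsplit] at hmem_a
    rcases List.mem_append.mp hmem_a with h | h
    · exact Or.inl h
    · rcases List.mem_cons.mp h with he | h'
      · omega
      · exact Or.inr h'
  have hdn : k + 1 ∈ a ∨ k + 1 ∈ b := by
    rw [hsplit] at hmem_b
    rcases List.mem_append.mp hmem_b with h | h
    · exact Or.inl h
    · rcases List.mem_cons.mp h with he | h'
      · omega
      · exact Or.inr h'
  obtain ⟨hared, hbred⟩ := sub_reduced hsred hsplit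
  have harange : ∀ x ∈ a, 1 ≤ x ∧ x ≤ n - 1 := hared.1.1
  have hbrange : ∀ x ∈ b, 1 ≤ x ∧ x ≤ n - 1 := hbred.1.1
  have hw' : ∀ x, w x = wordProd a (sigmaT (k + 2) (wordProd b x)) := by
    intro x
    rw [← hsred.1.2, hsplit, wordProd_append, wordProd_cons]
    simp [Equiv.Perm.mul_apply]
  have hwim : ∀ S : Set ℕ,
      ⇑w '' S = ⇑(wordProd a) '' (⇑(sigmaT (k + 2)) '' (⇑(wordProd b) '' S)) := by
    intro S
    rw [← hsred.1.2, hsplit, wordProd_append, wordProd_cons, perm_image_mul, perm_image_mul]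
  set A := wordProd a with hAdef
  set B := wordProd b with hBdef
  have hAmem : MemSymm n A := memSymm_wordProd harange
  have hBmem : MemSymm n B := memSymm_wordProd hbrange
  have hApres : Pres (k + 2) A := pres_wordProd fun x hx he => hia (he ▸ hx)
  have hBpres : Pres (k + 2) B := pres_wordProd fun x hx he => hib (he ▸ hx)
  have hsig_mem : MemSymm n (sigmaT (k + 2)) := memSymm_sigmaT n (k + 2) (by omega) (by omega)
  have hsig_pres1 : Pres (k + 1) (sigmaT (k + 2)) := pres_sigmaT (by omega)
  have hsig_pres3 : Pres (k + 3) (sigmaT (k + 2)) := pres_sigmaT (by omega)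
  have hsw_i : sigmaT (k + 2) (k + 2) = k + 3 := Equiv.swap_apply_left _ _
  have hsw_i1 : sigmaT (k + 2) (k + 3) = k + 2 := Equiv.swap_apply_right _ _
  have hsw_lo : ∀ x, x ≤ k + 1 → sigmaT (k + 2) x = x := fun x hx =>
    Equiv.swap_apply_of_ne_of_ne (by omega) (by omega)
  have hsw_hi : ∀ x, k + 4 ≤ x → sigmaT (k + 2) x = x := fun x hx =>
    Equiv.swap_apply_of_ne_of_ne (by omega) (by omega)
  have hicc1 : Set.Icc (1 : ℕ) (k + 1) = Set.Icc 1 (k + 2) \ {k + 2} := by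
    ext x
    simp only [Set.mem_Icc, Set.mem_diff, Set.mem_singleton_iff]
    omega
  have hicc2 : Set.Icc (1 : ℕ) (k + 2) = Set.Icc 1 (k + 1) ∪ {k + 2} := by
    ext x
    simp only [Set.mem_Icc, Set.mem_union, Set.mem_singleton_iff]
    omega
  have hicc3 : Set.Icc (1 : ℕ) (k + 3) = Set.Icc 1 (k + 2) ∪ {k + 3} := by
    ext x
    simp only [Set.mem_Icc, Set.mem_union, Set.mem_singleton_iff]
    omega
  rcases hup with hupa | hupb <;> rcases hdn with hdna | hdnb
  · -- i+1 ∈ a, i-1 ∈ a : pattern (d)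
    have hnb3 : k + 3 ∉ b := fun h => hside2.1 ⟨hupa, h⟩
    have hnb1 : k + 1 ∉ b := fun h => hside2.2 ⟨hdna, h⟩
    have hBp1 : Pres (k + 1) B := pres_wordProd fun x hx he => hnb1 (he ▸ hx)
    have hBp3 : Pres (k + 3) B := pres_wordProd fun x hx he => hnb3 (he ▸ hx)
    have hBfix2 : B (k + 2) = k + 2 := pres_fix_succ hBp1 hBpres
    have hBfix3 : B (k + 3) = k + 3 := pres_fix_succ hBpres hBp3
    have hA2 : A (k + 2) ≤ k + 1 := apply_succ_lt hared hApres hdna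
    have hA3 : k + 3 < A (k + 3) := apply_succ_gt hared hApres hupa
    have hw_i : w (k + 2) = A (k + 3) := by rw [hw' (k + 2), hBfix2, hsw_i]
    have hw_i1 : w (k + 3) = A (k + 2) := by rw [hw' (k + 3), hBfix3, hsw_i1]
    refine Or.inr (Or.inr (Or.inr ⟨by omega, by omega, ?_⟩))
    rw [hwim, pres_image_Icc hBmem hBp1, pres_image_Icc hsig_mem hsig_pres1, hicc1,
      perm_image_diff, pres_image_Icc hAmem hApres]
    ext x
    simp only [Set.mem_Icc, Set.mem_diff, Set.mem_union, Set.mem_singleton_iff]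
    rw [hw_i1]
    omega
  · -- i+1 ∈ a, i-1 ∈ b : pattern (a)
    have hnb3 : k + 3 ∉ b := fun h => hside2.1 ⟨hupa, h⟩
    have hna1 : k + 1 ∉ a := fun h => hside2.2 ⟨h, hdnb⟩
    have hAp1 : Pres (k + 1) A := pres_wordProd fun x hx he => hna1 (he ▸ hx)
    have hAfix2 : A (k + 2) = k + 2 := pres_fix_succ hAp1 hApres
    have hA3 : k + 3 < A (k + 3) := apply_succ_gt hared hApres hupa
    have hBp3 : Pres (k + 3) B := pres_wordProd fun x hx he => hnb3 (he ▸ hx)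
    have hBfix3 : B (k + 3) = k + 3 := pres_fix_succ hBpres hBp3
    have hB2 : B (k + 2) ≤ k + 1 := apply_succ_lt hbred hBpres hdnb
    have hw_i : w (k + 2) = A (B (k + 2)) := by rw [hw' (k + 2), hsw_lo _ hB2]
    have hw_i1 : w (k + 3) = k + 2 := by rw [hw' (k + 3), hBfix3, hsw_i1, hAfix2]
    have hwlt : w (k + 2) ≤ k + 1 := by
      rw [hw_i]
      exact (hAp1 _).2 hB2
    refine Or.inl ⟨by omega, hw_i1, A (k + 3), hA3, ?_⟩
    rw [hwim, pres_image_Icc hBmem hBp3, pres_image_Icc hsig_mem hsig_pres3, hicc3,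
      Set.image_union, Set.image_singleton, pres_image_Icc hAmem hApres]
  · -- i+1 ∈ b, i-1 ∈ a : pattern (b)
    have hna3 : k + 3 ∉ a := fun h => hside2.1 ⟨h, hupb⟩
    have hnb1 : k + 1 ∉ b := fun h => hside2.2 ⟨hdna, h⟩
    have hAp3 : Pres (k + 3) A := pres_wordProd fun x hx he => hna3 (he ▸ hx)
    have hAfix3 : A (k + 3) = k + 3 := pres_fix_succ hApres hAp3
    have hA2 : A (k + 2) ≤ k + 1 := apply_succ_lt hared hApres hdna
    have hBp1 : Pres (k + 1) B := pres_wordProd fun x hx he => hnb1 (he ▸ hx)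
    have hBfix2 : B (k + 2) = k + 2 := pres_fix_succ hBp1 hBpres
    have hB3 : k + 3 < B (k + 3) := apply_succ_gt hbred hBpres hupb
    have hw_i : w (k + 2) = k + 3 := by rw [hw' (k + 2), hBfix2, hsw_i, hAfix3]
    have hw_i1 : w (k + 3) = A (B (k + 3)) := by rw [hw' (k + 3), hsw_hi _ (by omega)]
    have hwgt : k + 3 < w (k + 3) := by
      rw [hw_i1]
      have : ¬ A (B (k + 3)) ≤ k + 3 := by
        rw [hAp3]
        omega
      omega
    refine Or.inr (Or.inl ⟨hw_i, hwgt, A (k + 2), by omega, ?_⟩)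
    rw [hwim, pres_image_Icc hBmem hBp1, pres_image_Icc hsig_mem hsig_pres1, hicc1,
      perm_image_diff, pres_image_Icc hAmem hApres]
  · -- i+1 ∈ b, i-1 ∈ b : pattern (c)
    have hna3 : k + 3 ∉ a := fun h => hside2.1 ⟨h, hupb⟩
    have hna1 : k + 1 ∉ a := fun h => hside2.2 ⟨h, hdnb⟩
    have hAp1 : Pres (k + 1) A := pres_wordProd fun x hx he => hna1 (he ▸ hx)
    have hAp3 : Pres (k + 3) A := pres_wordProd fun x hx he => hna3 (he ▸ hx)
    have hAfix3 : A (k + 3) = k + 3 := pres_fix_succ hApres hAp3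
    have hB2 : B (k + 2) ≤ k + 1 := apply_succ_lt hbred hBpres hdnb
    have hB3 : k + 3 < B (k + 3) := apply_succ_gt hbred hBpres hupb
    have hw_i : w (k + 2) = A (B (k + 2)) := by rw [hw' (k + 2), hsw_lo _ hB2]
    have hw_i1 : w (k + 3) = A (B (k + 3)) := by rw [hw' (k + 3), hsw_hi _ (by omega)]
    have hwlt : w (k + 2) ≤ k + 1 := by
      rw [hw_i]
      exact (hAp1 _).2 hB2
    have hwgt : k + 3 < w (k + 3) := by
      rw [hw_i1]
      have : ¬ A (B (k + 3)) ≤ k + 3 := by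
        rw [hAp3]
        omega
      omega
    refine Or.inr (Or.inr (Or.inl ⟨by omega, hwgt, ?_⟩))
    have hstep1 : ⇑B '' Set.Icc 1 (k + 1) = Set.Icc 1 (k + 2) \ {B (k + 2)} := by
      rw [hicc1, perm_image_diff, pres_image_Icc hBmem hBpres]
    have hstep2 : ⇑(sigmaT (k + 2)) '' (Set.Icc 1 (k + 2) \ {B (k + 2)}) =
        (Set.Icc 1 (k + 1) \ {B (k + 2)}) ∪ {k + 3} := by
      rw [perm_image_diff, hsw_lo _ hB2, hicc2, Set.image_union, Set.image_singleton,
        pres_image_Icc hsig_mem hsig_pres1, hsw_i]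
      ext x
      simp only [Set.mem_Icc, Set.mem_diff, Set.mem_union, Set.mem_singleton_iff]
      omega
    have hstep3 : ⇑A '' ((Set.Icc 1 (k + 1) \ {B (k + 2)}) ∪ {k + 3}) =
        (Set.Icc 1 (k + 1) \ {A (B (k + 2))}) ∪ {k + 3} := by
      rw [Set.image_union, Set.image_singleton, hAfix3, perm_image_diff,
        pres_image_Icc hAmem hAp1]
    rw [hwim, hstep1, hstep2, hstep3, hw_i]
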